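/- For every t > 0, every fractionally t-critical graph is 2-connected and has no vertex-cut inducing a clique. -/

import Mathlib

/-- An `(a:b)`-coloring of `G`. -/
def HasFracColoring {V : Type*} (G : SimpleGraph V) (a b : ℕ) : Prop :=
  ∃ f : V → Finset (Fin a), (∀ v, (f v).card = b) ∧
    ∀ u v, G.Adj u v → Disjoint (f u) (f v)

/-- The fractional chromatic number. -/
noncomputable def fracChrom {V : Type*} (G : SimpleGraph V) : ℝ :=
  sInf {x : ℝ | ∃ a b : ℕ, 0 < a ∧ 0 < b ∧ HasFracColoring G a b ∧ x = (a : ℝ) / b}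

/-- `S` is a vertex-cut of `G` if deleting `S` leaves a disconnected graph. -/
def IsVertexCut {V : Type*} (G : SimpleGraph V) (S : Set V) : Prop :=
  ¬ (G.induce (Sᶜ : Set V)).Preconnected

/-- `G` is 2-connected: connected and no single vertex is a cut vertex. -/
def TwoConnected {V : Type*} (G : SimpleGraph V) : Prop :=
  G.Connected ∧ ∀ v : V, ¬ IsVertexCut G ({v} : Set V)

lemma fracChrom_le {W : Type*} (H : SimpleGraph W) {a b : ℕ} (ha : 0 < a) (hb : 0 < b)
    (h : HasFracColoring H a b) : fracChrom H ≤ (a : ℝ) / b := by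
  apply csInf_le
  · refine ⟨0, ?_⟩
    rintro x ⟨a', b', _, _, _, rfl⟩
    positivity
  · exact ⟨a, b, ha, hb, h, rfl⟩

lemma hasFracColoring_triv {W : Type*} [Fintype W] (H : SimpleGraph W) :
    HasFracColoring H (Fintype.card W + 1) 1 := by
  refine ⟨fun v => {(Fintype.equivFin W v).castSucc}, fun v => rfl, fun u v huv => ?_⟩
  rw [Finset.disjoint_singleton]
  intro he
  exact H.ne_of_adj huv ((Fintype.equivFin W).injective (Fin.castSucc_injective _ he))

lemma exists_coloring_lt {W : Type*} [Fintype W] (H : SimpleGraph W) {c : ℝ}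
    (h : fracChrom H < c) :
    ∃ a b : ℕ, 0 < a ∧ 0 < b ∧ HasFracColoring H a b ∧ (a : ℝ) / b < c := by
  have hne : {x : ℝ | ∃ a b : ℕ, 0 < a ∧ 0 < b ∧ HasFracColoring H a b ∧ x = (a : ℝ) / b}.Nonempty :=
    ⟨_, Fintype.card W + 1, 1, Nat.succ_pos _, Nat.one_pos, hasFracColoring_triv H, rfl⟩
  obtain ⟨x, ⟨a, b, ha, hb, hcol, rfl⟩, hxc⟩ := exists_lt_of_csInf_lt hne h
  exact ⟨a, b, ha, hb, hcol, hxc⟩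

lemma HasFracColoring.scale_pad {W : Type*} {H : SimpleGraph W} {a b k a' : ℕ}
    (h : HasFracColoring H a b) (hk : a * k ≤ a') : HasFracColoring H a' (b * k) := by
  obtain ⟨f, hcard, hdisj⟩ := h
  refine ⟨fun v => ((f v ×ˢ (Finset.univ : Finset (Fin k))).map
      finProdFinEquiv.toEmbedding).map (Fin.castLEEmb hk), fun v => ?_, ?_⟩
  · simp [hcard]
  · intro u v huv
    rw [Finset.disjoint_map, Finset.disjoint_map]
    rw [Finset.disjoint_left]
    rintro ⟨x, y⟩ hx hy
    rw [Finset.mem_product] at hx hy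
    exact (Finset.disjoint_left.mp (hdisj u v huv)) hx.1 hy.1

open Finset in
lemma exists_perm_mapping {a : ℕ} {ι : Type*} [DecidableEq ι] (S' : Finset ι)
    (g₁ g₂ : ι → Finset (Fin a))
    (hcard : ∀ s ∈ S', (g₂ s).card = (g₁ s).card)
    (hd₁ : ∀ s ∈ S', ∀ s' ∈ S', s ≠ s' → Disjoint (g₁ s) (g₁ s'))
    (hd₂ : ∀ s ∈ S', ∀ s' ∈ S', s ≠ s' → Disjoint (g₂ s) (g₂ s')) :
    ∃ σ : Equiv.Perm (Fin a), ∀ s ∈ S', ∀ x ∈ g₂ s, σ x ∈ g₁ s := by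
  classical
  set T₂ : Finset (Fin a) := S'.biUnion g₂ with hT₂
  set T₁ : Finset (Fin a) := S'.biUnion g₁ with hT₁
  -- per-color-class bijections
  have hceq : ∀ s, (g₂ s).card = (g₁ s).card → Fintype.card ↥(g₂ s) = Fintype.card ↥(g₁ s) := by
    intro s h; simpa using h
  set es : ι → Fin a → Fin a := fun s x =>
    if h : (g₂ s).card = (g₁ s).card ∧ x ∈ g₂ s then
      ((Fintype.equivOfCardEq (hceq s h.1)) ⟨x, h.2⟩ : Fin a)
    else x with hes
  have p1 : ∀ s ∈ S', ∀ x (hx : x ∈ g₂ s), es s x ∈ g₁ s := by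
    intro s hs x hx
    simp only [hes, dif_pos (And.intro (hcard s hs) hx)]
    exact ((Fintype.equivOfCardEq (hceq s (hcard s hs))) ⟨x, hx⟩).2
  have p2 : ∀ s ∈ S', ∀ x ∈ g₂ s, ∀ y ∈ g₂ s, es s x = es s y → x = y := by
    intro s hs x hx y hy hxy
    simp only [hes, dif_pos (And.intro (hcard s hs) hx), dif_pos (And.intro (hcard s hs) hy)] at hxy
    have := (Fintype.equivOfCardEq (hceq s (hcard s hs))).injective (Subtype.coe_injective hxy)
    exact congrArg Subtype.val this
  have p3 : ∀ s ∈ S', ∀ y ∈ g₁ s, ∃ x ∈ g₂ s, es s x = y := by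
    intro s hs y hy
    refine ⟨((Fintype.equivOfCardEq (hceq s (hcard s hs))).symm ⟨y, hy⟩ : Fin a),
      ((Fintype.equivOfCardEq (hceq s (hcard s hs))).symm ⟨y, hy⟩).2, ?_⟩
    simp only [hes, dif_pos (And.intro (hcard s hs)
      ((Fintype.equivOfCardEq (hceq s (hcard s hs))).symm ⟨y, hy⟩).2)]
    rw [Subtype.coe_eta]
    rw [Equiv.apply_symm_apply]
  -- selector
  have selspec : ∀ x : Fin a, x ∈ T₂ → ∃ s, s ∈ S' ∧ x ∈ g₂ s := by
    intro x hx; simpa using Finset.mem_biUnion.mp hx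
  set sel : ∀ x : ↥T₂, ι := fun x => (selspec x.1 x.2).choose with hsel
  have hsel1 : ∀ x : ↥T₂, sel x ∈ S' := fun x => (selspec x.1 x.2).choose_spec.1
  have hsel2 : ∀ x : ↥T₂, x.1 ∈ g₂ (sel x) := fun x => (selspec x.1 x.2).choose_spec.2
  have selunique : ∀ (x : ↥T₂) (s : ι), s ∈ S' → x.1 ∈ g₂ s → sel x = s := by
    intro x s hs hxs
    by_contra hne
    exact Finset.disjoint_left.mp (hd₂ _ (hsel1 x) _ hs hne) (hsel2 x) hxs
  have memT₁ : ∀ x : ↥T₂, es (sel x) x.1 ∈ T₁ :=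
    fun x => Finset.mem_biUnion.mpr ⟨sel x, hsel1 x, p1 _ (hsel1 x) _ (hsel2 x)⟩
  set e : ↥T₂ ≃ ↥T₁ := Equiv.ofBijective (fun x => (⟨es (sel x) x.1, memT₁ x⟩ : ↥T₁)) (by
    constructor
    · intro x y hxy
      have hxy' : es (sel x) x.1 = es (sel y) y.1 := congrArg Subtype.val hxy
      have hmx : es (sel x) x.1 ∈ g₁ (sel x) := p1 _ (hsel1 x) _ (hsel2 x)
      have hmy : es (sel y) y.1 ∈ g₁ (sel y) := p1 _ (hsel1 y) _ (hsel2 y)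
      have hss : sel x = sel y := by
        by_contra hne
        exact Finset.disjoint_left.mp (hd₁ _ (hsel1 x) _ (hsel1 y) hne) hmx (hxy' ▸ hmy)
      apply Subtype.ext
      exact p2 _ (hsel1 x) _ (hsel2 x) _ (hss ▸ hsel2 y) (hxy'.trans (by rw [hss]))
    · rintro ⟨y, hy⟩
      obtain ⟨s, hs, hys⟩ := Finset.mem_biUnion.mp hy
      obtain ⟨x, hxs, hesx⟩ := p3 s hs y hys
      have hxT : x ∈ T₂ := Finset.mem_biUnion.mpr ⟨s, hs, hxs⟩
      refine ⟨⟨x, hxT⟩, ?_⟩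
      apply Subtype.ext
      have : sel ⟨x, hxT⟩ = s := selunique _ s hs hxs
      simp only [this, hesx]) with he
  have hTcard : T₂.card = T₁.card := by
    have := Fintype.card_congr e
    simpa using this
  have hcompl : Fintype.card ↥(T₂ᶜ) = Fintype.card ↥(T₁ᶜ) := by
    simp [Finset.card_compl, hTcard]
  set e' : ↥(T₂ᶜ) ≃ ↥(T₁ᶜ) := Fintype.equivOfCardEq hcompl with he'
  set e₂ : {x : Fin a // ¬ x ∈ T₂} ≃ {x : Fin a // ¬ x ∈ T₁} :=
    ((Equiv.subtypeEquivRight (fun x => by simp)).trans e').trans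
      (Equiv.subtypeEquivRight (fun x => by simp)) with he₂
  refine ⟨((Equiv.sumCompl (· ∈ T₂)).symm.trans ((Equiv.sumCongr e e₂).trans
      (Equiv.sumCompl (· ∈ T₁)))), ?_⟩
  intro s hs x hx
  have hxT : x ∈ T₂ := Finset.mem_biUnion.mpr ⟨s, hs, hx⟩
  have h1 : (Equiv.sumCompl (· ∈ T₂)).symm x = Sum.inl ⟨x, hxT⟩ :=
    Equiv.sumCompl_symm_apply_of_pos hxT
  simp only [Equiv.trans_apply, h1, Equiv.sumCongr_apply, Sum.map_inl, Equiv.sumCompl_apply_inl]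
  have : sel ⟨x, hxT⟩ = s := selunique _ s hs hx
  show (e ⟨x, hxT⟩ : Fin a) ∈ g₁ s
  rw [he]
  show es (sel ⟨x, hxT⟩) x ∈ g₁ s
  rw [this]
  exact p1 s hs x hx

/-- The induced subgraph on a set of vertices, as a `Subgraph`. -/
def indSub {V : Type*} (G : SimpleGraph V) (W : Set V) : G.Subgraph where
  verts := W
  Adj x y := x ∈ W ∧ y ∈ W ∧ G.Adj x y
  adj_sub h := h.2.2
  edge_vert h := h.1
  symm := ⟨fun x y h => ⟨h.2.1, h.1, h.2.2.symm⟩⟩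

lemma indSub_ne_top {V : Type*} {G : SimpleGraph V} {W : Set V} {v : V} (hv : v ∉ W) :
    indSub G W ≠ ⊤ := by
  intro h
  have : (indSub G W).verts = (⊤ : G.Subgraph).verts := by rw [h]
  rw [SimpleGraph.Subgraph.verts_top] at this
  apply hv
  have hv' : v ∈ (indSub G W).verts := by rw [this]; exact Set.mem_univ v
  exact hv'


lemma no_clique_cut {V : Type*} [Fintype V] (G : SimpleGraph V) (t : ℝ)
    (hgt : t < fracChrom G)
    (hsub : ∀ H : G.Subgraph, H ≠ ⊤ → fracChrom H.coe ≤ t)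
    (S : Set V) (hcut : IsVertexCut G S) (hclq : G.IsClique S) : False := by
  classical
  rw [IsVertexCut, SimpleGraph.Preconnected] at hcut
  push_neg at hcut
  obtain ⟨u, w, huw⟩ := hcut
  set A : Set V := {x | ∃ hx : x ∈ Sᶜ, (G.induce (Sᶜ : Set V)).Reachable u ⟨x, hx⟩} with hA
  set B : Set V := Sᶜ \ A with hB
  have huA : u.1 ∈ A := ⟨u.2, by rw [Subtype.coe_eta]⟩
  have hwB : w.1 ∈ B := by
    refine ⟨w.2, fun hw => ?_⟩
    obtain ⟨hw', hr⟩ := hw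
    exact huw (by rwa [Subtype.coe_eta] at hr)
  have hAB : ∀ x ∈ A, ∀ y ∈ B, ¬ G.Adj x y := by
    rintro x ⟨hx, hrx⟩ y hy hadj
    have hy' : y ∈ Sᶜ := hy.1
    have hadj' : (G.induce (Sᶜ : Set V)).Adj ⟨x, hx⟩ ⟨y, hy'⟩ := by
      simp [SimpleGraph.comap_adj, hadj]
    exact hy.2 ⟨hy', hrx.trans hadj'.reachable⟩
  set W₁ : Set V := A ∪ S with hW₁
  set W₂ : Set V := B ∪ S with hW₂
  have hSW₁ : S ⊆ W₁ := Set.subset_union_right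
  have hSW₂ : S ⊆ W₂ := Set.subset_union_right
  have hwW₁ : w.1 ∉ W₁ := by
    rintro (h | h)
    · exact hwB.2 h
    · exact w.2 h
  have huW₂ : u.1 ∉ W₂ := by
    rintro (h | h)
    · exact h.2 huA
    · exact u.2 h
  haveI : Fintype ↥W₁ := Fintype.ofFinite _
  haveI : Fintype ↥W₂ := Fintype.ofFinite _
  have h₁ : fracChrom (indSub G W₁).coe < fracChrom G :=
    lt_of_le_of_lt (hsub _ (indSub_ne_top hwW₁)) hgt
  have h₂ : fracChrom (indSub G W₂).coe < fracChrom G :=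
    lt_of_le_of_lt (hsub _ (indSub_ne_top huW₂)) hgt
  obtain ⟨a₁, b₁, ha₁, hb₁, hc₁, hr₁⟩ := exists_coloring_lt _ h₁
  obtain ⟨a₂, b₂, ha₂, hb₂, hc₂, hr₂⟩ := exists_coloring_lt _ h₂
  set a : ℕ := max (a₁ * b₂) (a₂ * b₁) with ha
  set b : ℕ := b₁ * b₂ with hb
  have hbpos : 0 < b := Nat.mul_pos hb₁ hb₂
  have hapos : 0 < a := lt_of_lt_of_le (Nat.mul_pos ha₁ hb₂) (le_max_left _ _)
  have hc₁' : HasFracColoring (indSub G W₁).coe a b := hc₁.scale_pad (le_max_left _ _)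
  have hc₂' : HasFracColoring (indSub G W₂).coe a b := by
    have := hc₂.scale_pad (a' := a) (le_max_right _ _)
    rwa [Nat.mul_comm b₂ b₁] at this
  obtain ⟨f₁, hf₁card, hf₁disj⟩ := hc₁'
  obtain ⟨f₂, hf₂card, hf₂disj⟩ := hc₂'
  set g₁ : V → Finset (Fin a) := fun x => if hx : x ∈ W₁ then f₁ ⟨x, hx⟩ else ∅ with hg₁
  set g₂ : V → Finset (Fin a) := fun x => if hx : x ∈ W₂ then f₂ ⟨x, hx⟩ else ∅ with hg₂
  have hg₁card : ∀ x ∈ W₁, (g₁ x).card = b := by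
    intro x hx; simp only [hg₁, dif_pos hx]; exact hf₁card _
  have hg₂card : ∀ x ∈ W₂, (g₂ x).card = b := by
    intro x hx; simp only [hg₂, dif_pos hx]; exact hf₂card _
  have hdisj₁ : ∀ x (hx : x ∈ W₁) y (hy : y ∈ W₁), G.Adj x y → Disjoint (g₁ x) (g₁ y) := by
    intro x hx y hy hadj
    simp only [hg₁, dif_pos hx, dif_pos hy]
    exact hf₁disj ⟨x, hx⟩ ⟨y, hy⟩ ⟨hx, hy, hadj⟩
  have hdisj₂ : ∀ x (hx : x ∈ W₂) y (hy : y ∈ W₂), G.Adj x y → Disjoint (g₂ x) (g₂ y) := by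
    intro x hx y hy hadj
    simp only [hg₂, dif_pos hx, dif_pos hy]
    exact hf₂disj ⟨x, hx⟩ ⟨y, hy⟩ ⟨hx, hy, hadj⟩
  set S' : Finset V := S.toFinset with hS'
  have hmemS' : ∀ s ∈ S', s ∈ S := fun s hs => Set.mem_toFinset.mp hs
  obtain ⟨σ, hσ⟩ := exists_perm_mapping S' g₁ g₂
    (fun s hs => by rw [hg₂card s (hSW₂ (hmemS' s hs)), hg₁card s (hSW₁ (hmemS' s hs))])
    (fun s hs s' hs' hne => hdisj₁ s (hSW₁ (hmemS' s hs)) s' (hSW₁ (hmemS' s' hs'))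
      (hclq (hmemS' s hs) (hmemS' s' hs') hne))
    (fun s hs s' hs' hne => hdisj₂ s (hSW₂ (hmemS' s hs)) s' (hSW₂ (hmemS' s' hs'))
      (hclq (hmemS' s hs) (hmemS' s' hs') hne))
  have himg : ∀ s ∈ S, (g₂ s).image σ = g₁ s := by
    intro s hs
    have hsS' : s ∈ S' := Set.mem_toFinset.mpr hs
    apply Finset.eq_of_subset_of_card_le
    · intro y hy
      obtain ⟨x, hx, rfl⟩ := Finset.mem_image.mp hy
      exact hσ s hsS' x hx
    · rw [Finset.card_image_of_injective _ σ.injective,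
        hg₂card s (hSW₂ hs), hg₁card s (hSW₁ hs)]
  -- the glued coloring
  have hcover : ∀ x : V, x ∉ W₁ → x ∈ B := by
    intro x hx
    by_cases hxS : x ∈ S
    · exact absurd (hSW₁ hxS) hx
    · by_cases hxA : x ∈ A
      · exact absurd (Or.inl hxA) hx
      · exact ⟨hxS, hxA⟩
  have hglue : HasFracColoring G a b := by
    refine ⟨fun x => if x ∈ W₁ then g₁ x else (g₂ x).image σ, fun x => ?_, ?_⟩
    · beta_reduce
      by_cases hx : x ∈ W₁
      · rw [if_pos hx]; exact hg₁card x hx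
      · rw [if_neg hx, Finset.card_image_of_injective _ σ.injective]
        exact hg₂card x (Or.inl (hcover x hx))
    · intro x y hadj
      beta_reduce
      by_cases hx : x ∈ W₁ <;> by_cases hy : y ∈ W₁
      · rw [if_pos hx, if_pos hy]; exact hdisj₁ x hx y hy hadj
      · rw [if_pos hx, if_neg hy]
        have hyB : y ∈ B := hcover y hy
        rcases hx with hxA | hxS
        · exact absurd hadj (hAB x hxA y hyB)
        · rw [← himg x hxS, Finset.disjoint_image σ.injective]
          exact hdisj₂ x (hSW₂ hxS) y (Or.inl hyB) hadj
      · rw [if_neg hx, if_pos hy]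
        have hxB : x ∈ B := hcover x hx
        rcases hy with hyA | hyS
        · exact absurd hadj.symm (hAB y hyA x hxB)
        · rw [← himg y hyS, Finset.disjoint_image σ.injective]
          exact hdisj₂ x (Or.inl hxB) y (hSW₂ hyS) hadj
      · rw [if_neg hx, if_neg hy, Finset.disjoint_image σ.injective]
        exact hdisj₂ x (Or.inl (hcover x hx)) y (Or.inl (hcover y hy)) hadj
  have hle : fracChrom G ≤ (a : ℝ) / b := fracChrom_le G hapos hbpos hglue
  have hlt : (a : ℝ) / b < fracChrom G := by
    rcases max_choice (a₁ * b₂) (a₂ * b₁) with h | h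
    · rw [ha, h, hb]
      push_cast
      rw [mul_div_mul_right _ _ (by exact_mod_cast hb₂.ne' : (b₂ : ℝ) ≠ 0)]
      exact hr₁
    · rw [ha, h, hb, Nat.mul_comm b₁ b₂]
      push_cast
      rw [mul_div_mul_right _ _ (by exact_mod_cast hb₁.ne' : (b₁ : ℝ) ≠ 0)]
      exact hr₂
  exact absurd hle (not_le.mpr hlt)

/-- For every `t > 0`, every fractionally `t`-critical graph is 2-connected and
has no vertex-cut inducing a clique. -/
theorem twoConnected_of_fractionally_critical {V : Type*} [Fintype V]
    (G : SimpleGraph V) (t : ℝ) (ht : 0 < t)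
    (hgt : t < fracChrom G)
    (hsub : ∀ H : G.Subgraph, H ≠ ⊤ → fracChrom H.coe ≤ t) :
    TwoConnected G ∧ ¬ ∃ S : Set V, IsVertexCut G S ∧ G.IsClique S := by
  classical
  have hne : Nonempty V := by
    by_contra hempty
    haveI : IsEmpty V := not_nonempty_iff.mp hempty
    obtain ⟨n, hn⟩ := exists_nat_one_div_lt ht
    have hcol : HasFracColoring G 1 (n + 1) :=
      ⟨fun v => isEmptyElim v, fun v => isEmptyElim v, fun u _ _ => isEmptyElim u⟩
    have h1 := fracChrom_le G Nat.one_pos (Nat.succ_pos n) hcol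
    have h2 : fracChrom G < t := lt_of_le_of_lt h1 (by push_cast; push_cast at hn; linarith)
    linarith
  have hnoclique : ∀ S, IsVertexCut G S → ¬ G.IsClique S :=
    fun S hc hq => (no_clique_cut G t hgt hsub S hc hq).elim
  have hpre : G.Preconnected := by
    by_contra hpc
    refine hnoclique ∅ ?_ (by simp [SimpleGraph.IsClique])
    intro hpc'
    apply hpc
    rw [Set.compl_empty] at hpc'
    intro x y
    have h := (hpc' ⟨x, trivial⟩ ⟨y, trivial⟩).map (SimpleGraph.induceUnivIso G).toHom
    exact h
  refine ⟨⟨⟨hpre⟩, fun v hcv => hnoclique {v} hcv (SimpleGraph.isClique_singleton v)⟩, ?_⟩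
  rintro ⟨S, hc, hq⟩
  exact hnoclique S hc hq
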